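/- Let G = ℤ_m ≀ F_k be a lamplighter group over a tree (m ≥ 2, k ≥ 2) with Cayley graph X as described, let x, y be two vertices of the tree 𝕋, let u = (x, f) and v = (y, g) be two vertices of X, and let γ be a geodesic in X joining u to v. Then the projection of γ to 𝕋 contains every edge of the tree-geodesic [x, y] exactly once. -/

import Mathlib

open Filter Topology
open scoped Classical

/-- The Cayley graph of the free group `F_k` with respect to the free generators:
a homogeneous tree of degree `2k`. -/
def treeGraph (k : ℕ) : SimpleGraph (FreeGroup (Fin k)) where
  Adj a b := a ≠ b ∧ ∃ i : Fin k, a⁻¹ * b = FreeGroup.of i ∨ b⁻¹ * a = FreeGroup.of i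
  symm := by
    constructor
    rintro a b ⟨h1, i, h2⟩
    exact ⟨h1.symm, i, h2.symm⟩
  loopless := ⟨fun a h => h.1 rfl⟩

/-- The Cayley graph of the lamplighter group `ℤ_m ≀ F_k` with respect to the standard
generators: vertices are pairs (position in the tree, finitely supported configuration
of lamps), and edges either move the lamplighter along a tree edge or switch the lamp
at the current position by `±1`. -/
def lampGraph (m k : ℕ) :
    SimpleGraph (FreeGroup (Fin k) × (FreeGroup (Fin k) →₀ ZMod m)) where
  Adj u v :=
    (u.2 = v.2 ∧ (treeGraph k).Adj u.1 v.1) ∨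
    (u.1 = v.1 ∧ u.2 ≠ v.2 ∧ (∀ z, z ≠ u.1 → u.2 z = v.2 z) ∧
      (v.2 u.1 = u.2 u.1 + 1 ∨ u.2 u.1 = v.2 u.1 + 1))
  symm := by
    constructor
    rintro u v (⟨h1, h2⟩ | ⟨h1, h2, h3, h4⟩)
    · exact Or.inl ⟨h1.symm, (treeGraph k).adj_symm h2⟩
    · refine Or.inr ⟨h1.symm, h2.symm, fun z hz => (h3 z (by rw [h1]; exact hz)).symm, ?_⟩
      rw [← h1]
      exact h4.symm
  loopless := by
    constructor
    rintro u (⟨h1, h2⟩ | ⟨h1, h2, h3, h4⟩)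
    · exact h2.1 rfl
    · exact h2 rfl

namespace Stmt13


open FreeGroup

variable {k : ℕ}

lemma singleton_mul_toWord (ℓ : Fin k × Bool) (v : FreeGroup (Fin k)) :
    (FreeGroup.mk [ℓ] * v).toWord =
      if v.toWord.head? = some (ℓ.1, !ℓ.2) then v.toWord.tail else ℓ :: v.toWord := by
  conv_lhs => rw [← FreeGroup.mk_toWord (x := v)]
  rw [FreeGroup.mul_mk, FreeGroup.toWord_mk, List.singleton_append, FreeGroup.reduce.cons]
  rw [FreeGroup.reduce_toWord]
  cases hv : v.toWord with
  | nil => simp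
  | cons hd tl =>
      simp only [List.head?_cons, Option.some.injEq, List.tail_cons]
      by_cases hc : hd = (ℓ.1, !ℓ.2)
      · rw [if_pos hc, if_pos]
        subst hc; exact ⟨rfl, by simp⟩
      · rw [if_neg hc, if_neg]
        rintro ⟨h1, h2⟩
        exact hc (Prod.ext h1.symm (by cases hb : ℓ.2 <;> simp [hb] at h2 ⊢ <;> simp [h2]))

lemma singleton_mul_length (ℓ : Fin k × Bool) (v : FreeGroup (Fin k)) :
    (FreeGroup.mk [ℓ] * v).toWord.length =
      if v.toWord.head? = some (ℓ.1, !ℓ.2) then v.toWord.length - 1 else v.toWord.length + 1 := by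
  rw [singleton_mul_toWord]
  split <;> simp [List.length_tail]

lemma inv_toWord_length (v : FreeGroup (Fin k)) : (v⁻¹).toWord.length = v.toWord.length := by
  rw [FreeGroup.toWord_inv, FreeGroup.invRev_length]

lemma inv_toWord_head? (v : FreeGroup (Fin k)) :
    (v⁻¹).toWord.head? = (v.toWord.getLast?).map (fun g => (g.1, !g.2)) := by
  rw [FreeGroup.toWord_inv]
  unfold FreeGroup.invRev
  rw [← List.map_reverse, List.head?_map, List.head?_reverse]

lemma mul_singleton_length (v : FreeGroup (Fin k)) (ℓ : Fin k × Bool) :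
    (v * FreeGroup.mk [ℓ]).toWord.length =
      if v.toWord.getLast? = some (ℓ.1, !ℓ.2) then v.toWord.length - 1 else v.toWord.length + 1 := by
  have h1 : v * FreeGroup.mk [ℓ] = (FreeGroup.mk [(ℓ.1, !ℓ.2)] * v⁻¹)⁻¹ := by
    rw [mul_inv_rev, inv_inv, FreeGroup.inv_mk]
    congr 1
    simp [FreeGroup.invRev]
  rw [h1, inv_toWord_length, singleton_mul_length, inv_toWord_head?, inv_toWord_length]
  cases hg : v.toWord.getLast? with
  | none => simp
  | some c =>
      simp only [Option.map_some, Option.some.injEq]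
      by_cases hc : c = (ℓ.1, !ℓ.2)
      · rw [if_pos, if_pos hc]
        subst hc; simp
      · rw [if_neg, if_neg hc]
        intro h
        apply hc
        have h1 := congrArg Prod.fst h
        have h2 := congrArg Prod.snd h
        simp at h1 h2
        exact Prod.ext h1 (by cases hb : ℓ.2 <;> simp [hb] at h2 ⊢ <;> simp [← h2])

lemma adj_letter {a b : FreeGroup (Fin k)} (h : (treeGraph k).Adj a b) :
    ∃ τ : Fin k × Bool, a⁻¹ * b = FreeGroup.mk [τ] := by
  obtain ⟨hne, i, hi | hi⟩ := h
  · exact ⟨(i, true), by rw [hi]; rfl⟩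
  · refine ⟨(i, false), ?_⟩
    have : a⁻¹ * b = (b⁻¹ * a)⁻¹ := by group
    rw [this, hi]
    rfl

lemma adj_of_letter {a b : FreeGroup (Fin k)} (τ : Fin k × Bool)
    (h : a⁻¹ * b = FreeGroup.mk [τ]) : (treeGraph k).Adj a b := by
  have hne : a ≠ b := by
    intro he
    subst he
    rw [inv_mul_cancel] at h
    have := congrArg FreeGroup.toWord h
    simp [FreeGroup.toWord_mk, FreeGroup.reduce_singleton] at this
  refine ⟨hne, τ.1, ?_⟩
  cases hτ : τ.2 with
  | true =>
      left
      rw [h]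
      have : τ = (τ.1, true) := Prod.ext rfl hτ
      rw [this]
      rfl
  | false =>
      right
      have : b⁻¹ * a = (a⁻¹ * b)⁻¹ := by group
      rw [this, h, FreeGroup.inv_mk]
      have : FreeGroup.invRev [τ] = [(τ.1, true)] := by
        simp [FreeGroup.invRev, hτ]
      rw [this]
      rfl


open FreeGroup
variable {k : ℕ}

lemma mk_singleton_inv (τ : Fin k × Bool) :
    (FreeGroup.mk [τ])⁻¹ = FreeGroup.mk [(τ.1, !τ.2)] := by
  rw [FreeGroup.inv_mk]
  rfl

lemma norm_le_walk {a b : FreeGroup (Fin k)} (p : (treeGraph k).Walk a b) :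
    (a⁻¹ * b).toWord.length ≤ p.length := by
  induction p with
  | nil => simp
  | @cons u v w h p ih =>
      obtain ⟨τ, hτ⟩ := adj_letter h
      have he : u⁻¹ * w = FreeGroup.mk [τ] * (v⁻¹ * w) := by rw [← hτ]; group
      rw [he, singleton_mul_length, SimpleGraph.Walk.length_cons]
      split <;> omega

lemma exists_walk_norm : ∀ (n : ℕ) (a b : FreeGroup (Fin k)),
    (a⁻¹ * b).toWord.length = n → ∃ p : (treeGraph k).Walk a b, p.length = n := by
  intro n
  induction n with
  | zero =>
      intro a b h
      rw [List.length_eq_zero_iff, FreeGroup.toWord_eq_nil_iff, inv_mul_eq_one] at h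
      subst h
      exact ⟨SimpleGraph.Walk.nil, rfl⟩
  | succ n ih =>
      intro a b h
      cases hw : (a⁻¹ * b).toWord with
      | nil => rw [hw] at h; simp at h
      | cons τ t =>
          have hτ : a⁻¹ * (a * FreeGroup.mk [τ]) = FreeGroup.mk [τ] := by group
          have hadj := adj_of_letter τ hτ
          have hstep : (a * FreeGroup.mk [τ])⁻¹ * b = FreeGroup.mk [(τ.1, !τ.2)] * (a⁻¹ * b) := by
            rw [mul_inv_rev, mk_singleton_inv, mul_assoc]
          have hrec : ((a * FreeGroup.mk [τ])⁻¹ * b).toWord = t := by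
            rw [hstep, singleton_mul_toWord, hw]
            simp
          have hlen : ((a * FreeGroup.mk [τ])⁻¹ * b).toWord.length = n := by
            rw [hrec]
            rw [hw] at h
            simpa using Nat.succ_injective h
          obtain ⟨p, hp⟩ := ih _ b hlen
          exact ⟨SimpleGraph.Walk.cons hadj p, by simp [hp]⟩

lemma walk_dart_split {V : Type*} {G : SimpleGraph V} {a b : V} (p : G.Walk a b) (d : G.Dart)
    (hd : d ∈ p.darts) :
    ∃ (p1 : G.Walk a d.toProd.1) (p2 : G.Walk d.toProd.2 b),
      p1.length + 1 + p2.length = p.length := by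
  induction p with
  | nil => simp [SimpleGraph.Walk.darts_nil] at hd
  | @cons u v w h p ih =>
      rw [SimpleGraph.Walk.darts_cons, List.mem_cons] at hd
      rcases hd with rfl | hd
      · exact ⟨SimpleGraph.Walk.nil, p, by simp only [SimpleGraph.Walk.length_nil, SimpleGraph.Walk.length_cons]; omega⟩
      · obtain ⟨p1, p2, hl⟩ := ih hd
        exact ⟨SimpleGraph.Walk.cons h p1, p2, by simp [SimpleGraph.Walk.length_cons]; omega⟩

/-- Side of the tree vertex `t` w.r.t. the directed edge `(z,w)`: `true` iff `t` lies on
the `w`-side. -/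
def phi (z : FreeGroup (Fin k)) (L0 : Fin k × Bool) (t : FreeGroup (Fin k)) : Bool :=
  decide ((t⁻¹ * z).toWord.getLast? = some L0)

lemma phi_z (z : FreeGroup (Fin k)) (L0 : Fin k × Bool) : phi z L0 z = false := by
  simp [phi]

lemma phi_w {z w : FreeGroup (Fin k)} {ℓ : Fin k × Bool} (hℓ : z⁻¹ * w = FreeGroup.mk [ℓ]) :
    phi z (ℓ.1, !ℓ.2) w = true := by
  have : w⁻¹ * z = FreeGroup.mk [(ℓ.1, !ℓ.2)] := by
    have h1 : w⁻¹ * z = (z⁻¹ * w)⁻¹ := by group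
    rw [h1, hℓ, mk_singleton_inv]
  simp [phi, this, FreeGroup.toWord_mk, FreeGroup.reduce_singleton]

lemma cut_edge {z w : FreeGroup (Fin k)} {ℓ : Fin k × Bool} (hℓ : z⁻¹ * w = FreeGroup.mk [ℓ])
    {a b : FreeGroup (Fin k)} (hab : (treeGraph k).Adj a b)
    (hne : phi z (ℓ.1, !ℓ.2) a ≠ phi z (ℓ.1, !ℓ.2) b) :
    (a = z ∧ b = w) ∨ (a = w ∧ b = z) := by
  obtain ⟨τ, hτ⟩ := adj_letter hab
  have hv : b⁻¹ * z = FreeGroup.mk [(τ.1, !τ.2)] * (a⁻¹ * z) := by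
    have h1 : b⁻¹ * z = (a⁻¹ * b)⁻¹ * (a⁻¹ * z) := by group
    rw [h1, hτ, mk_singleton_inv]
  have hword := singleton_mul_toWord (k := k) (τ.1, !τ.2) (a⁻¹ * z)
  rw [← hv] at hword
  simp only [Bool.not_not] at hword
  by_cases hc : (a⁻¹ * z).toWord.head? = some (τ.1, τ.2)
  · -- cancellation
    rw [if_pos hc] at hword
    cases hu : (a⁻¹ * z).toWord with
    | nil => rw [hu] at hc; simp at hc
    | cons c t =>
        rw [hu] at hc hword
        simp only [List.head?_cons, Option.some.injEq] at hc
        simp only [List.tail_cons] at hword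
        cases t with
        | nil =>
            -- a⁻¹ z = [τ], b = z, and φ a must be true so a = w
            have hbz : b = z := by
              have : a⁻¹ * z = FreeGroup.mk [τ] := by
                rw [← FreeGroup.mk_toWord (x := a⁻¹ * z), hu, hc]
              exact mul_left_cancel (hτ.trans this.symm)
            have hφb : phi z (ℓ.1, !ℓ.2) b = false := by
              simp [phi, hword]
            have hφa : phi z (ℓ.1, !ℓ.2) a = true := by
              cases hfa : phi z (ℓ.1, !ℓ.2) a
              · exact absurd (hfa.trans hφb.symm) hne
              · rfl
            have hc2 : c = (ℓ.1, !ℓ.2) := by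
              simp only [phi, hu, List.getLast?_singleton, Option.some.injEq,
                decide_eq_true_eq] at hφa
              exact hφa
            have haw : a = w := by
              have h1 : a⁻¹ * z = FreeGroup.mk [(ℓ.1, !ℓ.2)] := by
                rw [← FreeGroup.mk_toWord (x := a⁻¹ * z), hu, hc2]
              have h2 : w⁻¹ * z = FreeGroup.mk [(ℓ.1, !ℓ.2)] := by
                have hh : w⁻¹ * z = (z⁻¹ * w)⁻¹ := by group
                rw [hh, hℓ, mk_singleton_inv]
              have h3 : a⁻¹ * z = w⁻¹ * z := h1.trans h2.symm
              have := mul_right_cancel h3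
              exact inv_injective this
            exact Or.inr ⟨haw, hbz⟩
        | cons c2 t2 =>
            exfalso
            apply hne
            simp [phi, hu, hword, List.getLast?_cons_cons]
  · -- no cancellation
    rw [if_neg hc] at hword
    cases hu : (a⁻¹ * z).toWord with
    | nil =>
        have haz : a = z := by
          rw [FreeGroup.toWord_eq_nil_iff, inv_mul_eq_one] at hu
          exact hu
        have hφa : phi z (ℓ.1, !ℓ.2) a = false := by
          simp [phi, hu]
        have hφb : phi z (ℓ.1, !ℓ.2) b = true := by
          cases hfb : phi z (ℓ.1, !ℓ.2) b
          · exact absurd (hφa.trans hfb.symm) hne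
          · rfl
        have hτℓ : (τ.1, !τ.2) = (ℓ.1, !ℓ.2) := by
          rw [hu] at hword
          simp only [phi, hword, List.getLast?_singleton, Option.some.injEq,
            decide_eq_true_eq] at hφb
          exact hφb
        have hτℓ' : τ = ℓ := by
          have h1 := congrArg Prod.fst hτℓ
          have h2 := congrArg Prod.snd hτℓ
          simp at h1 h2
          exact Prod.ext h1 h2
        have hbw : b = w := by
          have h1 : a⁻¹ * b = z⁻¹ * w := by rw [hτ, hτℓ', hℓ]
          rw [haz] at h1
          exact mul_left_cancel h1
        exact Or.inl ⟨haz, hbw⟩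
    | cons c t =>
        exfalso
        apply hne
        rw [hu] at hword
        simp [phi, hu, hword, List.getLast?_cons_cons]


open FreeGroup

variable {m k : ℕ}

/-- A move of the lamplighter: walk to an adjacent tree vertex, or switch the current lamp. -/
abbrev Mv (m k : ℕ) := FreeGroup (Fin k) ⊕ ZMod m

/-- Position after one move. -/
def mstep (a : FreeGroup (Fin k)) : Mv m k → FreeGroup (Fin k)
  | .inl t => t
  | .inr _ => a

/-- Validity of one move at position `a`. -/
def mok (a : FreeGroup (Fin k)) : Mv m k → Prop
  | .inl t => (treeGraph k).Adj a t
  | .inr ε => ε = 1 ∨ ε = -1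

/-- `chainP a b L`: the list of moves `L` is valid starting at `a` and ends at `b`. -/
def chainP : FreeGroup (Fin k) → FreeGroup (Fin k) → List (Mv m k) → Prop
  | a, b, [] => a = b
  | a, b, mv :: L => mok a mv ∧ chainP (mstep a mv) b L

/-- Total lamp effect of a list of moves started at `a`. -/
noncomputable def eff : FreeGroup (Fin k) → List (Mv m k) → (FreeGroup (Fin k) →₀ ZMod m)
  | _, [] => 0
  | _, .inl t :: L => eff t L
  | a, .inr ε :: L => Finsupp.single a ε + eff a L

/-- Number of moves crossing the edge `{z, w}` (in either direction). -/
def crossN (z w : FreeGroup (Fin k)) : FreeGroup (Fin k) → List (Mv m k) → ℕ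
  | _, [] => 0
  | a, .inl t :: L => (if (a = z ∧ t = w) ∨ (a = w ∧ t = z) then 1 else 0) + crossN z w t L
  | a, .inr _ :: L => crossN z w a L

lemma chain_append {a b c : FreeGroup (Fin k)} {P Q : List (Mv m k)}
    (hP : chainP a b P) (hQ : chainP b c Q) : chainP a c (P ++ Q) := by
  induction P generalizing a with
  | nil => rwa [show a = b from hP]
  | cons mv P ih => exact ⟨hP.1, ih hP.2⟩

lemma eff_append {a b : FreeGroup (Fin k)} {P : List (Mv m k)} (hP : chainP a b P)
    (Q : List (Mv m k)) : eff a (P ++ Q) = eff a P + eff b Q := by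
  induction P generalizing a with
  | nil => rw [show a = b from hP]; simp [eff]
  | cons mv P ih =>
      cases mv with
      | inl t =>
          have h2 : chainP t b P := hP.2
          simp only [List.cons_append, eff, List.append_eq]
          exact ih h2
      | inr ε =>
          have h2 : chainP a b P := hP.2
          simp only [List.cons_append, eff, List.append_eq]
          rw [ih h2, add_assoc]

lemma walk_to_chain {z w : FreeGroup (Fin k)} (hzw : z ≠ w)
    {u v : FreeGroup (Fin k) × (FreeGroup (Fin k) →₀ ZMod m)}
    (p : (lampGraph m k).Walk u v) :
    ∃ L : List (Mv m k), chainP u.1 v.1 L ∧ u.2 + eff u.1 L = v.2 ∧ L.length = p.length ∧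
      crossN z w u.1 L = p.darts.countP (fun d' => decide
        ((d'.toProd.1.1 = z ∧ d'.toProd.2.1 = w) ∨
         (d'.toProd.1.1 = w ∧ d'.toProd.2.1 = z))) := by
  induction p with
  | nil => exact ⟨[], rfl, by simp [eff], rfl, by simp [crossN]⟩
  | @cons u u' v h p ih =>
      obtain ⟨L, hchain, heff, hlen, hcross⟩ := ih
      rcases id h with ⟨hcfg, hadj⟩ | ⟨hpos, hne, hoff, hpm⟩
      · -- tree move
        refine ⟨.inl u'.1 :: L, ⟨hadj, hchain⟩, ?_, by simp [hlen], ?_⟩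
        · simpa [eff, hcfg] using heff
        · rw [SimpleGraph.Walk.darts_cons, List.countP_cons]
          simp only [crossN]
          rw [hcross]
          by_cases hc : (u.1 = z ∧ u'.1 = w) ∨ (u.1 = w ∧ u'.1 = z)
          · simp only [if_pos hc]
            have : decide ((u.1 = z ∧ u'.1 = w) ∨ (u.1 = w ∧ u'.1 = z)) = true :=
              decide_eq_true hc
            simp [this]
            omega
          · simp only [if_neg hc]
            have : decide ((u.1 = z ∧ u'.1 = w) ∨ (u.1 = w ∧ u'.1 = z)) = false :=
              decide_eq_false hc
            simp [this]
      · -- lamp move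
        refine ⟨.inr (u'.2 u.1 - u.2 u.1) :: L, ⟨?_, ?_⟩, ?_, by simp [hlen], ?_⟩
        · rcases hpm with h1 | h1
          · left; rw [h1]; ring
          · right; rw [h1]; ring
        · show chainP u.1 v.1 L
          rw [hpos]; exact hchain
        · show u.2 + (Finsupp.single u.1 (u'.2 u.1 - u.2 u.1) + eff u.1 L) = v.2
          have hkey : u.2 + Finsupp.single u.1 (u'.2 u.1 - u.2 u.1) = u'.2 := by
            ext t
            by_cases ht : t = u.1
            · subst ht
              simp [Finsupp.single_eq_same]
            · simp [Finsupp.single_eq_of_ne' (Ne.symm ht), hoff t ht]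
          rw [← add_assoc, hkey, hpos]
          exact heff
        · show crossN z w u.1 L = _
          rw [SimpleGraph.Walk.darts_cons, List.countP_cons]
          rw [← hpos] at hcross
          have hfalse : ¬ ((u.1 = z ∧ u'.1 = w) ∨ (u.1 = w ∧ u'.1 = z)) := by
            rintro (⟨h1, h2⟩ | ⟨h1, h2⟩)
            · exact hzw (by rw [← h1, hpos, h2])
            · exact hzw (by rw [← h2, ← hpos, h1])
          have hdec : decide ((u.1 = z ∧ u'.1 = w) ∨ (u.1 = w ∧ u'.1 = z)) = false :=
            decide_eq_false hfalse
          rw [hcross]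
          simp [hdec]

lemma chain_to_walk (h1 : (1 : ZMod m) ≠ 0) :
    ∀ (L : List (Mv m k)) (a b : FreeGroup (Fin k)), chainP a b L →
    ∀ c : FreeGroup (Fin k) →₀ ZMod m,
      ∃ p : (lampGraph m k).Walk (a, c) (b, c + eff a L), p.length = L.length := by
  intro L
  induction L with
  | nil =>
      intro a b hab c
      have : a = b := hab
      subst this
      refine ⟨SimpleGraph.Walk.nil.copy rfl ?_, ?_⟩
      · show (a, c) = (a, c + eff a [])
        simp [eff]
      · simp
  | cons mv L ih =>
      intro a b hab c
      obtain ⟨hok, hrest⟩ := hab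
      cases mv with
      | inl t =>
          have hok' : (treeGraph k).Adj a t := hok
          obtain ⟨p, hp⟩ := ih t b hrest c
          have hadj : (lampGraph m k).Adj (a, c) (t, c) := Or.inl ⟨rfl, hok'⟩
          refine ⟨(SimpleGraph.Walk.cons hadj p).copy rfl (by simp only [eff]), by exact (SimpleGraph.Walk.length_copy _ _ _).trans (by rw [SimpleGraph.Walk.length_cons, hp]; rfl)⟩
      | inr ε =>
          have hok' : ε = 1 ∨ ε = -1 := hok
          have hne0 : ε ≠ 0 := by
            rcases hok' with rfl | rfl
            · exact h1
            · exact neg_ne_zero.mpr h1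
          obtain ⟨p, hp⟩ := ih a b hrest (c + Finsupp.single a ε)
          have hadj : (lampGraph m k).Adj (a, c) (a, c + Finsupp.single a ε) := by
            refine Or.inr ⟨rfl, ?_, ?_, ?_⟩
            · intro he
              have : Finsupp.single a ε = 0 := by
                have := congrArg (fun f => f a) he
                simp at this
                exact Finsupp.single_eq_zero.mpr (by simpa using this)
              exact hne0 (Finsupp.single_eq_zero.mp this)
            · intro t ht
              simp [Finsupp.single_eq_of_ne' (Ne.symm ht)]
            · rcases hok' with rfl | rfl
              · left; simp
              · right; simp
          refine ⟨(SimpleGraph.Walk.cons hadj p).copy rfl ?_, ?_⟩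
          · show (b, c + Finsupp.single a ε + eff a L) = (b, c + eff a (.inr ε :: L))
            simp only [eff]
            rw [add_assoc]
          · simp [hp]

lemma cross_pos {z w : FreeGroup (Fin k)} {φ : FreeGroup (Fin k) → Bool}
    (hcut : ∀ a b : FreeGroup (Fin k), (treeGraph k).Adj a b → φ a ≠ φ b →
      (a = z ∧ b = w) ∨ (a = w ∧ b = z)) :
    ∀ (L : List (Mv m k)) (a b : FreeGroup (Fin k)), chainP a b L → φ a ≠ φ b →
      1 ≤ crossN z w a L := by
  intro L
  induction L with
  | nil =>
      intro a b hab hne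
      exact absurd (congrArg φ hab) hne
  | cons mv L ih =>
      intro a b hab hne
      obtain ⟨hok, hrest⟩ := hab
      cases mv with
      | inr ε =>
          simp only [crossN]
          exact ih a b hrest hne
      | inl t =>
          simp only [crossN]
          by_cases hta : φ t = φ a
          · have := ih t b hrest (by rw [hta]; exact hne)
            omega
          · have hcc := hcut a t hok (fun he => hta he.symm)
            rw [if_pos hcc]
            omega
/-- Split a list of moves into the moves made on the `φ = false` side (`z`-side) and the
moves made on the `φ = true` side (`w`-side), dropping the crossings of the edge `{z,w}`. -/
def msplit (φ : FreeGroup (Fin k) → Bool) : FreeGroup (Fin k) → List (Mv m k) →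
    List (Mv m k) × List (Mv m k)
  | _, [] => ([], [])
  | a, .inr ε :: L =>
      let r := msplit φ a L
      if φ a then (r.1, .inr ε :: r.2) else (.inr ε :: r.1, r.2)
  | a, .inl t :: L =>
      let r := msplit φ t L
      if φ t = φ a then
        (if φ a then (r.1, .inl t :: r.2) else (.inl t :: r.1, r.2))
      else r

lemma crossN_cons_inl (z w a t : FreeGroup (Fin k)) (L : List (Mv m k)) :
    crossN z w a (.inl t :: L) =
      (if (a = z ∧ t = w) ∨ (a = w ∧ t = z) then 1 else 0) + crossN z w t L := rfl

lemma crossN_cons_pos {z w a t : FreeGroup (Fin k)} (L : List (Mv m k))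
    (h : (a = z ∧ t = w) ∨ (a = w ∧ t = z)) :
    crossN z w a (.inl t :: L) = 1 + crossN z w t L := by
  rw [crossN_cons_inl, if_pos h]

lemma crossN_cons_neg {z w a t : FreeGroup (Fin k)} (L : List (Mv m k))
    (h : ¬((a = z ∧ t = w) ∨ (a = w ∧ t = z))) :
    crossN z w a (.inl t :: L) = crossN z w t L := by
  rw [crossN_cons_inl, if_neg h, Nat.zero_add]

lemma split_spec {z w : FreeGroup (Fin k)} {φ : FreeGroup (Fin k) → Bool}
    (hcut : ∀ a b : FreeGroup (Fin k), (treeGraph k).Adj a b → φ a ≠ φ b →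
      (a = z ∧ b = w) ∨ (a = w ∧ b = z))
    (hz : φ z = false) (hw : φ w = true) :
    ∀ (L : List (Mv m k)) (a b : FreeGroup (Fin k)), chainP a b L →
      chainP (if φ a then z else a) (if φ b then z else b) (msplit φ a L).1 ∧
      chainP (if φ a then a else w) (if φ b then b else w) (msplit φ a L).2 ∧
      eff a L = eff (if φ a then z else a) (msplit φ a L).1
              + eff (if φ a then a else w) (msplit φ a L).2 ∧
      (msplit φ a L).1.length + (msplit φ a L).2.length + crossN z w a L = L.length := by
  intro L
  induction L with
  | nil =>
      intro a b hab
      have hab' : a = b := hab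
      subst hab'
      exact ⟨rfl, rfl, by simp [eff, msplit], by simp [crossN, msplit]⟩
  | cons mv L ih =>
      intro a b hab
      obtain ⟨hok, hrest⟩ := hab
      cases mv with
      | inr ε =>
          have h2 : chainP a b L := hrest
          obtain ⟨C1, C2, E, N⟩ := ih a b h2
          have hok' : ε = 1 ∨ ε = -1 := hok
          by_cases hfa : φ a = true
          · have ifa : ∀ u v : FreeGroup (Fin k), (if φ a = true then u else v) = u :=
              fun u v => if_pos hfa
            have hsplit : msplit φ a (.inr ε :: L) =
                ((msplit φ a L).1, .inr ε :: (msplit φ a L).2) := by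
              simp only [msplit]
              rw [if_pos hfa]
            rw [hsplit]
            simp only [ifa] at C1 C2 E ⊢
            refine ⟨C1, ⟨hok', C2⟩, ?_, ?_⟩
            · simp only [eff]
              rw [E, add_left_comm]
            · simp only [crossN, List.length_cons]
              omega
          · have ifa : ∀ u v : FreeGroup (Fin k), (if φ a = true then u else v) = v :=
              fun u v => if_neg hfa
            have hsplit : msplit φ a (.inr ε :: L) =
                (.inr ε :: (msplit φ a L).1, (msplit φ a L).2) := by
              simp only [msplit]
              rw [if_neg hfa]
            rw [hsplit]
            simp only [ifa] at C1 C2 E ⊢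
            refine ⟨⟨hok', C1⟩, C2, ?_, ?_⟩
            · simp only [eff]
              rw [E, add_assoc]
            · simp only [crossN, List.length_cons]
              omega
      | inl t =>
          have hokt : (treeGraph k).Adj a t := hok
          have h2 : chainP t b L := hrest
          obtain ⟨C1, C2, E, N⟩ := ih t b h2
          by_cases hta : φ t = φ a
          · have hnc : ¬((a = z ∧ t = w) ∨ (a = w ∧ t = z)) := by
              rintro (⟨ha, ht⟩ | ⟨ha, ht⟩)
              · rw [ht, ha, hw, hz] at hta; simp at hta
              · rw [ht, ha, hz, hw] at hta; simp at hta
            by_cases hfa : φ a = true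
            · have hft : φ t = true := hta.trans hfa
              have ifa : ∀ u v : FreeGroup (Fin k), (if φ a = true then u else v) = u :=
                fun u v => if_pos hfa
              have ift : ∀ u v : FreeGroup (Fin k), (if φ t = true then u else v) = u :=
                fun u v => if_pos hft
              have hsplit : msplit φ a (.inl t :: L) =
                  ((msplit φ t L).1, .inl t :: (msplit φ t L).2) := by
                simp only [msplit]
                rw [if_pos hta, if_pos hfa]
              rw [hsplit]
              simp only [ifa]
              simp only [ift] at C1 C2 E
              refine ⟨C1, ⟨hokt, C2⟩, ?_, ?_⟩
              · simp only [eff]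
                exact E
              · simp only [crossN_cons_neg L hnc, List.length_cons]
                omega
            · have hft : ¬ (φ t = true) := fun h => hfa (hta.symm.trans h)
              have ifa : ∀ u v : FreeGroup (Fin k), (if φ a = true then u else v) = v :=
                fun u v => if_neg hfa
              have ift : ∀ u v : FreeGroup (Fin k), (if φ t = true then u else v) = v :=
                fun u v => if_neg hft
              have hsplit : msplit φ a (.inl t :: L) =
                  (.inl t :: (msplit φ t L).1, (msplit φ t L).2) := by
                simp only [msplit]
                rw [if_pos hta, if_neg hfa]
              rw [hsplit]
              simp only [ifa]
              simp only [ift] at C1 C2 E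
              refine ⟨⟨hokt, C1⟩, C2, ?_, ?_⟩
              · simp only [eff]
                exact E
              · simp only [crossN_cons_neg L hnc, List.length_cons]
                omega
          · have hcc := hcut a t hokt (fun he => hta he.symm)
            rcases hcc with ⟨ha, ht⟩ | ⟨ha, ht⟩
            · -- crossing z → w
              subst ha; subst ht
              have hfa : ¬ (φ a = true) := by rw [hz]; simp
              have hft : φ t = true := hw
              have ifa : ∀ u v : FreeGroup (Fin k), (if φ a = true then u else v) = v :=
                fun u v => if_neg hfa
              have ift : ∀ u v : FreeGroup (Fin k), (if φ t = true then u else v) = u :=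
                fun u v => if_pos hft
              have hne : ¬ (φ t = φ a) := by rw [hz, hw]; simp
              have hsplit : msplit φ a (.inl t :: L) = msplit φ t L := by
                simp only [msplit]
                rw [if_neg hne]
              rw [hsplit]
              simp only [ifa]
              simp only [ift] at C1 C2 E
              have hcr : ((a = a ∧ t = t) ∨ (a = t ∧ t = a)) := Or.inl ⟨rfl, rfl⟩
              refine ⟨C1, C2, ?_, ?_⟩
              · simp only [eff]
                exact E
              · simp only [crossN_cons_pos L hcr, List.length_cons]
                omega
            · -- crossing w → z
              subst ha; subst ht
              have hfa : φ a = true := hw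
              have hft : ¬ (φ t = true) := by rw [hz]; simp
              have ifa : ∀ u v : FreeGroup (Fin k), (if φ a = true then u else v) = u :=
                fun u v => if_pos hfa
              have ift : ∀ u v : FreeGroup (Fin k), (if φ t = true then u else v) = v :=
                fun u v => if_neg hft
              have hne : ¬ (φ t = φ a) := by rw [hz, hw]; simp
              have hsplit : msplit φ a (.inl t :: L) = msplit φ t L := by
                simp only [msplit]
                rw [if_neg hne]
              rw [hsplit]
              simp only [ifa]
              simp only [ift] at C1 C2 E
              have hcr : ((a = t ∧ t = a) ∨ (a = a ∧ t = t)) := Or.inr ⟨rfl, rfl⟩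
              refine ⟨C1, C2, ?_, ?_⟩
              · simp only [eff]
                exact E
              · simp only [crossN_cons_pos L hcr, List.length_cons]
                omega


end Stmt13

/-- **Tree edges of a geodesic in the lamplighter group are crossed exactly once.**
Let `X` be the Cayley graph of `ℤ_m ≀ F_k` (`m ≥ 2`, `k ≥ 2`), let `u = (x, f)` and
`v = (y, g)` be vertices of `X`, and let `p` be a geodesic in `X` joining `u` to `v`.
Then the projection of `p` to the tree traverses every edge of the tree geodesic
`[x, y]` exactly once. -/
theorem stmt_13 (m k : ℕ) (hm : 2 ≤ m) (hk : 2 ≤ k)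
    (x y : FreeGroup (Fin k)) (f g : FreeGroup (Fin k) →₀ ZMod m)
    (p : (lampGraph m k).Walk (x, f) (y, g))
    (hp : p.length = (lampGraph m k).dist (x, f) (y, g))
    (q : (treeGraph k).Walk x y) (hq : q.length = (treeGraph k).dist x y)
    (z w : FreeGroup (Fin k)) (hzw : ∃ d ∈ q.darts, d.toProd = (z, w)) :
    (p.darts.countP fun d' => decide
      ((d'.toProd.1.1 = z ∧ d'.toProd.2.1 = w) ∨
       (d'.toProd.1.1 = w ∧ d'.toProd.2.1 = z))) = 1 := by
  classical
  haveI : Fact (1 < m) := ⟨hm⟩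
  have h1ne0 : (1 : ZMod m) ≠ 0 := one_ne_zero
  obtain ⟨d, hd, hdp⟩ := hzw
  have e1 : d.toProd.1 = z := by rw [hdp]
  have e2 : d.toProd.2 = w := by rw [hdp]
  have hadj : (treeGraph k).Adj z w := by
    have hadj0 := d.adj
    rw [e1, e2] at hadj0
    exact hadj0
  have hzwne : z ≠ w := hadj.ne
  obtain ⟨ℓ, hℓ⟩ := Stmt13.adj_letter hadj
  -- split the tree geodesic at the dart
  obtain ⟨q1, q2, hql⟩ := Stmt13.walk_dart_split q d hd
  let q1' : (treeGraph k).Walk x z := q1.copy rfl e1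
  let q2' : (treeGraph k).Walk w y := q2.copy e2 rfl
  have hq1len : q1'.length = q1.length := SimpleGraph.Walk.length_copy _ _ _
  have hq2len : q2'.length = q2.length := SimpleGraph.Walk.length_copy _ _ _
  -- the side function
  have hφz : Stmt13.phi z (ℓ.1, !ℓ.2) z = false := Stmt13.phi_z z _
  have hφw : Stmt13.phi z (ℓ.1, !ℓ.2) w = true := Stmt13.phi_w hℓ
  have hcut : ∀ a b : FreeGroup (Fin k), (treeGraph k).Adj a b →
      Stmt13.phi z (ℓ.1, !ℓ.2) a ≠ Stmt13.phi z (ℓ.1, !ℓ.2) b →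
      (a = z ∧ b = w) ∨ (a = w ∧ b = z) :=
    fun a b hab hne => Stmt13.cut_edge hℓ hab hne
  -- x is on the z-side
  have hφx : Stmt13.phi z (ℓ.1, !ℓ.2) x = false := by
    cases hfx : Stmt13.phi z (ℓ.1, !ℓ.2) x with
    | false => rfl
    | true =>
        exfalso
        have hfx' : (x⁻¹ * z).toWord.getLast? = some (ℓ.1, !ℓ.2) := of_decide_eq_true hfx
        have hxw : x⁻¹ * w = (x⁻¹ * z) * FreeGroup.mk [ℓ] := by rw [← hℓ]; group
        have hlen : (x⁻¹ * w).toWord.length = (x⁻¹ * z).toWord.length - 1 := by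
          rw [hxw, Stmt13.mul_singleton_length, if_pos hfx']
        have hpos : 1 ≤ (x⁻¹ * z).toWord.length := by
          rcases Nat.eq_zero_or_pos (x⁻¹ * z).toWord.length with h0 | h0
          · rw [List.length_eq_zero_iff] at h0
            rw [h0] at hfx'
            simp at hfx'
          · exact h0
        have hnormxz : (x⁻¹ * z).toWord.length ≤ q1.length := by
          have := Stmt13.norm_le_walk q1'
          rwa [hq1len] at this
        obtain ⟨pxw, hpxw⟩ := Stmt13.exists_walk_norm ((x⁻¹ * w).toWord.length) x w rfl
        have hd1 := SimpleGraph.dist_le (pxw.append q2')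
        rw [SimpleGraph.Walk.length_append, hpxw, hq2len] at hd1
        rw [← hq] at hd1
        omega
  -- y is on the w-side
  have hφy : Stmt13.phi z (ℓ.1, !ℓ.2) y = true := by
    cases hfy : Stmt13.phi z (ℓ.1, !ℓ.2) y with
    | true => rfl
    | false =>
        exfalso
        have hfy' : ¬ ((y⁻¹ * z).toWord.getLast? = some (ℓ.1, !ℓ.2)) := of_decide_eq_false hfy
        have hyw : y⁻¹ * w = (y⁻¹ * z) * FreeGroup.mk [ℓ] := by rw [← hℓ]; group
        have hlen : (y⁻¹ * w).toWord.length = (y⁻¹ * z).toWord.length + 1 := by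
          rw [hyw, Stmt13.mul_singleton_length, if_neg hfy']
        have hinv : (y⁻¹ * w).toWord.length = (w⁻¹ * y).toWord.length := by
          rw [show y⁻¹ * w = (w⁻¹ * y)⁻¹ by group, Stmt13.inv_toWord_length]
        have hinv2 : (z⁻¹ * y).toWord.length = (y⁻¹ * z).toWord.length := by
          rw [show z⁻¹ * y = (y⁻¹ * z)⁻¹ by group, Stmt13.inv_toWord_length]
        have hnormwy : (w⁻¹ * y).toWord.length ≤ q2.length := by
          have := Stmt13.norm_le_walk q2'
          rwa [hq2len] at this
        obtain ⟨pzy, hpzy⟩ := Stmt13.exists_walk_norm ((z⁻¹ * y).toWord.length) z y rfl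
        have hd1 := SimpleGraph.dist_le (q1'.append pzy)
        rw [SimpleGraph.Walk.length_append, hpzy, hq1len] at hd1
        rw [← hq] at hd1
        omega
  -- convert the lamplighter geodesic into a chain of moves
  obtain ⟨L, hchain, heff, hlenL, hcross⟩ := Stmt13.walk_to_chain hzwne p
  have hchain0 : Stmt13.chainP x y L := hchain
  have heff0 : f + Stmt13.eff x L = g := heff
  -- the surgery
  obtain ⟨C1, C2, E, N⟩ := Stmt13.split_spec hcut hφz hφw L x y hchain0
  have ifx : ∀ u v : FreeGroup (Fin k),
      (if Stmt13.phi z (ℓ.1, !ℓ.2) x = true then u else v) = v :=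
    fun u v => if_neg (by rw [hφx]; simp)
  have ify : ∀ u v : FreeGroup (Fin k),
      (if Stmt13.phi z (ℓ.1, !ℓ.2) y = true then u else v) = u :=
    fun u v => if_pos hφy
  simp only [ifx, ify] at C1 C2 E
  have hchain' : Stmt13.chainP x y
      ((Stmt13.msplit (Stmt13.phi z (ℓ.1, !ℓ.2)) x L).1 ++
        (.inl w :: (Stmt13.msplit (Stmt13.phi z (ℓ.1, !ℓ.2)) x L).2)) :=
    Stmt13.chain_append C1 ⟨hadj, C2⟩
  have heff' : Stmt13.eff x
      ((Stmt13.msplit (Stmt13.phi z (ℓ.1, !ℓ.2)) x L).1 ++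
        (.inl w :: (Stmt13.msplit (Stmt13.phi z (ℓ.1, !ℓ.2)) x L).2)) = Stmt13.eff x L := by
    rw [Stmt13.eff_append C1]
    simp only [Stmt13.eff]
    rw [E]
  obtain ⟨p', hp'⟩ := Stmt13.chain_to_walk h1ne0 _ x y hchain' f
  have hdle : (lampGraph m k).dist (x, f) (y, g) ≤ p'.length := by
    rw [← heff0, ← heff']
    exact SimpleGraph.dist_le p'
  have hp'len : p'.length =
      (Stmt13.msplit (Stmt13.phi z (ℓ.1, !ℓ.2)) x L).1.length +
      (1 + (Stmt13.msplit (Stmt13.phi z (ℓ.1, !ℓ.2)) x L).2.length) := by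
    rw [hp']
    simp only [List.length_append, List.length_cons]
    omega
  have hc1 : 1 ≤ Stmt13.crossN z w x L :=
    Stmt13.cross_pos hcut L x y hchain0 (by rw [hφx, hφy]; simp)
  have hcross0 : Stmt13.crossN z w x L = List.countP (fun d' => decide
        ((d'.toProd.1.1 = z ∧ d'.toProd.2.1 = w) ∨
         (d'.toProd.1.1 = w ∧ d'.toProd.2.1 = z))) p.darts := hcross
  rw [← hcross0]
  omega
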